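/- Let A be a ring, A₀ a subring with ring retraction π : A → A₀, A₊ = ker π, satisfying: every finitely generated right A-module M with M·A₊ = M is zero. Let 0 → K → Q → P → 0 be an exact sequence of right A-modules with Q finitely generated and P projective, such that the induced map K ⊗_A A₀ → Q ⊗_A A₀ is zero and Q ⊗_A A₀ → P ⊗_A A₀ is an isomorphism. Then K = 0 and Q → P is an isomorphism. -/
import Mathlib


universe u

/-- The submodule `N·A₊` (for left modules: `A₊·N`), where `A₊ = ker π`. -/
def kerSMulSubmodule {A : Type u} [Ring A] {A₀ : Subring A} (π : A →+* A₀)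
    (N : Type u) [AddCommGroup N] [Module A N] : Submodule A N :=
  Submodule.span A {x : N | ∃ a ∈ RingHom.ker π, ∃ m : N, x = a • m}

/-- The functor `T = - ⊗_A A₀`, i.e. `M ↦ M/M·A₊`, applied to a linear map. -/
def inducedT {A : Type u} [Ring A] {A₀ : Subring A} (π : A →+* A₀)
    {E P : Type u} [AddCommGroup E] [Module A E] [AddCommGroup P] [Module A P]
    (ψ : E →ₗ[A] P) :
    (E ⧸ kerSMulSubmodule π E) →ₗ[A] P ⧸ kerSMulSubmodule π P :=
  Submodule.mapQ _ _ ψ (by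
    refine Submodule.span_le.2 ?_
    rintro x ⟨a, ha, m, rfl⟩
    refine Submodule.mem_comap.2 ?_
    rw [map_smul]
    exact Submodule.subset_span ⟨a, ha, ψ m, rfl⟩)

/-- Let `π : A → A₀` be a ring retraction onto a subring, `A₊ = ker π`, and suppose every
finitely generated `A`-module `M` with `M·A₊ = M` is zero. Let `0 → K → Q → P → 0` be an
exact sequence of `A`-modules with `Q` finitely generated and `P` projective, such that
the induced map `T(K) → T(Q)` is zero (i.e. the image of `K` lies in `Q·A₊`) and
`T(Q) → T(P)` is an isomorphism, where `T = − ⊗_A A₀ ≅ −/(−·A₊)`. Then `K = 0` and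
`Q → P` is an isomorphism. -/
theorem ses_step (A : Type u) [Ring A] (A₀ : Subring A) (π : A →+* A₀)
    (hπ : ∀ x : A₀, π (x : A) = x)
    (hNak : ∀ (M : Type u) [AddCommGroup M] [Module A M], Module.Finite A M →
      kerSMulSubmodule π M = ⊤ → Subsingleton M)
    (K Q P : Type u) [AddCommGroup K] [Module A K] [AddCommGroup Q] [Module A Q]
    [AddCommGroup P] [Module A P]
    [Module.Finite A Q] [Module.Projective A P]
    (i : K →ₗ[A] Q) (p : Q →ₗ[A] P)
    (hi : Function.Injective i) (hp : Function.Surjective p)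
    (hex : LinearMap.range i = LinearMap.ker p)
    (hT0 : LinearMap.range i ≤ kerSMulSubmodule π Q)
    (hTiso : Function.Bijective (inducedT π p)) :
    Subsingleton K ∧ Function.Bijective p := by
  -- Split the sequence using projectivity of `P`.
  obtain ⟨s, hs⟩ := Module.projective_lifting_property p (LinearMap.id) hp
  set e : Q →ₗ[A] Q := LinearMap.id - s ∘ₗ p with he
  have hps : ∀ x : P, p (s x) = x := fun x => congrArg (fun f => f x) (congrArg DFunLike.coe hs)
  have hpe : ∀ q, p (e q) = 0 := by
    intro q
    simp [he, LinearMap.sub_apply, map_sub, hps]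
  have hker : ∀ k : K, p (i k) = 0 := by
    intro k
    have : i k ∈ LinearMap.ker p := hex ▸ LinearMap.mem_range_self i k
    exact this
  have hek : ∀ k : K, e (i k) = i k := by
    intro k
    simp [he, LinearMap.sub_apply, hker k]
  have hre : ∀ q, e q ∈ LinearMap.range i := by
    intro q
    rw [hex]
    exact hpe q
  -- `K` is finitely generated.
  have hrr : LinearMap.range i = LinearMap.range e := by
    apply le_antisymm
    · rintro _ ⟨k, rfl⟩
      exact ⟨i k, hek k⟩
    · rintro _ ⟨q, rfl⟩
      exact hre q
  haveI : Module.Finite A (LinearMap.range e) := Module.Finite.range e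
  haveI hKfin : Module.Finite A K := by
    have eqv : K ≃ₗ[A] LinearMap.range e :=
      (LinearEquiv.ofInjective i hi).trans (LinearEquiv.ofEq _ _ hrr)
    exact Module.Finite.equiv eqv.symm
  -- `K·A₊ = K`.
  have hKtop : kerSMulSubmodule π K = ⊤ := by
    rw [eq_top_iff]
    intro k _
    have h1 : i k ∈ kerSMulSubmodule π Q := hT0 (LinearMap.mem_range_self i k)
    have h2 : e (i k) ∈ Submodule.map i (kerSMulSubmodule π K) := by
      have hmap : Submodule.map e (kerSMulSubmodule π Q) ≤
          Submodule.map i (kerSMulSubmodule π K) := by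
        rw [kerSMulSubmodule, Submodule.map_span, Submodule.span_le]
        rintro _ ⟨_, ⟨a, ha, m, rfl⟩, rfl⟩
        obtain ⟨k', hk'⟩ := hre m
        have : e (a • m) = i (a • k') := by
          rw [map_smul, map_smul, hk']
        rw [this]
        exact Submodule.mem_map_of_mem
          (Submodule.subset_span ⟨a, ha, k', rfl⟩)
      exact hmap (Submodule.mem_map_of_mem h1)
    rw [hek k] at h2
    obtain ⟨k', hk', hik⟩ := h2
    rwa [← hi hik]
  have hKsub : Subsingleton K := hNak K hKfin hKtop
  refine ⟨hKsub, ?_, hp⟩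
  -- injectivity of p
  rw [← LinearMap.ker_eq_bot, ← hex, eq_bot_iff]
  rintro _ ⟨k, rfl⟩
  have : k = 0 := Subsingleton.elim _ _
  simp [this]
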